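/- arXiv:2410.06745 — 3 statements merged into one kernel-verified Lean document; each statement's English description precedes it below -/
import Mathlib

section
/- If n is a positive integer with n not congruent to 7 modulo 8, then the n-th coefficient c₁(n) of the series 1/((q)_∞)^{24} (shifted: the coefficient of q^n in q^{-1}/((q)_∞)^{24}, i.e., the coefficient of q^{n+1} in 1/((q)_∞)^{24}) is even. -/
open PowerSeries Finset

noncomputable def qPochInf (R : Type) [CommRing R] (m : ℕ) : PowerSeries R :=
  PowerSeries.mk fun N =>
    PowerSeries.coeff (R := R) N (∏ n ∈ Finset.Icc 1 N, (1 - PowerSeries.X ^ (m * n)))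

private lemma coeff_stable (j N : ℕ) (hj : j ≤ N) :
    PowerSeries.coeff (R := ZMod 2) j (∏ n ∈ Finset.Icc 1 N, (1 - PowerSeries.X ^ n)) =
    PowerSeries.coeff (R := ZMod 2) j (∏ n ∈ Finset.Icc 1 j, (1 - PowerSeries.X ^ n)) := by
  induction N with
  | zero => interval_cases j; rfl
  | succ N ih =>
    rcases Nat.lt_or_ge j (N+1) with hlt | hge
    · have hle : j ≤ N := Nat.lt_succ_iff.mp hlt
      rw [Finset.prod_Icc_succ_top (by omega : 1 ≤ N + 1)]
      rw [mul_sub, mul_one, map_sub, PowerSeries.coeff_mul_X_pow', if_neg (by omega), sub_zero]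
      exact ih hle
    · have : j = N+1 := le_antisymm hj hge
      subst this; rfl

private lemma coeff_pow_congr {f g : PowerSeries (ZMod 2)} {n : ℕ}
    (h : ∀ i ≤ n, PowerSeries.coeff (R := ZMod 2) i f = PowerSeries.coeff (R := ZMod 2) i g) (m : ℕ) :
    ∀ j ≤ n, PowerSeries.coeff (R := ZMod 2) j (f ^ m) = PowerSeries.coeff (R := ZMod 2) j (g ^ m) := by
  induction m with
  | zero => intro j hj; simp
  | succ m ih =>
    intro j hj
    rw [pow_succ, pow_succ, PowerSeries.coeff_mul, PowerSeries.coeff_mul]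
    refine Finset.sum_congr rfl fun p hp => ?_
    rw [Finset.HasAntidiagonal.mem_antidiagonal] at hp
    rw [ih p.1 (by omega), h p.2 (by omega)]

private def Ok (f : PowerSeries (ZMod 2)) : Prop :=
  ∀ j, ¬ (8 ∣ j) → PowerSeries.coeff (R := ZMod 2) j f = 0

private lemma ok_one : Ok 1 := by
  intro j hj
  rw [PowerSeries.coeff_one, if_neg (by rintro rfl; exact hj ⟨0, rfl⟩)]

private lemma ok_mul {f g} (hf : Ok f) (hg : Ok g) : Ok (f * g) := by
  intro j hj
  rw [PowerSeries.coeff_mul]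
  refine Finset.sum_eq_zero fun p hp => ?_
  rw [Finset.HasAntidiagonal.mem_antidiagonal] at hp
  by_cases h1 : 8 ∣ p.1
  · have h2 : ¬ 8 ∣ p.2 := fun h2 => hj (hp ▸ Nat.dvd_add h1 h2)
    rw [hg p.2 h2, mul_zero]
  · rw [hf p.1 h1, zero_mul]

private lemma ok_factor (k : ℕ) : Ok (1 - PowerSeries.X ^ (8 * k)) := by
  intro j hj
  rw [map_sub, PowerSeries.coeff_one, PowerSeries.coeff_X_pow,
    if_neg (by rintro rfl; exact hj ⟨0, rfl⟩), if_neg (by rintro rfl; exact hj ⟨k, rfl⟩), sub_zero]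

private lemma sq_sub (a : PowerSeries (ZMod 2)) : (1 - a) ^ 2 = 1 - a ^ 2 := by
  have h2 : (2 : PowerSeries (ZMod 2)) = 0 := by
    have : ((PowerSeries.C (R := ZMod 2)) 2 : PowerSeries (ZMod 2)) = 2 := map_ofNat _ 2
    rw [← this, show (2 : ZMod 2) = 0 from rfl, map_zero]
  linear_combination (a ^ 2 - a) * h2

private lemma pow8 (k : ℕ) :
    (1 - PowerSeries.X ^ k : PowerSeries (ZMod 2)) ^ 8 = 1 - PowerSeries.X ^ (8 * k) := by
  calc (1 - PowerSeries.X ^ k : PowerSeries (ZMod 2)) ^ 8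
      = (((1 - PowerSeries.X ^ k) ^ 2) ^ 2) ^ 2 := by ring
    _ = 1 - (((PowerSeries.X ^ k) ^ 2) ^ 2) ^ 2 := by rw [sq_sub, sq_sub, sq_sub]
    _ = 1 - PowerSeries.X ^ (8 * k) := by rw [← pow_mul, ← pow_mul]; ring_nf

private lemma ok_partial_pow24 (N : ℕ) :
    Ok ((∏ n ∈ Finset.Icc 1 N, (1 - PowerSeries.X ^ n : PowerSeries (ZMod 2))) ^ 24) := by
  have h8 : (∏ n ∈ Finset.Icc 1 N, (1 - PowerSeries.X ^ n : PowerSeries (ZMod 2))) ^ 8 =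
      ∏ n ∈ Finset.Icc 1 N, (1 - PowerSeries.X ^ (8 * n) : PowerSeries (ZMod 2)) := by
    rw [← Finset.prod_pow]
    exact Finset.prod_congr rfl fun k _ => pow8 k
  have hok : Ok (∏ n ∈ Finset.Icc 1 N, (1 - PowerSeries.X ^ (8 * n) : PowerSeries (ZMod 2))) :=
    Finset.prod_induction _ Ok (fun _ _ => ok_mul) ok_one (fun k _ => ok_factor k)
  have : (∏ n ∈ Finset.Icc 1 N, (1 - PowerSeries.X ^ n : PowerSeries (ZMod 2))) ^ 24 =
      ((∏ n ∈ Finset.Icc 1 N, (1 - PowerSeries.X ^ n : PowerSeries (ZMod 2))) ^ 8) *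
      ((∏ n ∈ Finset.Icc 1 N, (1 - PowerSeries.X ^ n : PowerSeries (ZMod 2))) ^ 8) *
      ((∏ n ∈ Finset.Icc 1 N, (1 - PowerSeries.X ^ n : PowerSeries (ZMod 2))) ^ 8) := by ring
  rw [this, h8]
  exact ok_mul (ok_mul hok hok) hok

private lemma ok_F24 : Ok ((qPochInf (ZMod 2) 1) ^ 24) := by
  intro j hj
  have hagree : ∀ i ≤ j, PowerSeries.coeff (R := ZMod 2) i (qPochInf (ZMod 2) 1) =
      PowerSeries.coeff (R := ZMod 2) i (∏ n ∈ Finset.Icc 1 j, (1 - PowerSeries.X ^ n)) := by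
    intro i hi
    rw [qPochInf, PowerSeries.coeff_mk]
    simp only [one_mul]
    rw [coeff_stable i j hi]
  rw [coeff_pow_congr hagree 24 j le_rfl]
  exact ok_partial_pow24 j j hj

/-- If n ≥ 1 and n ≢ 7 (mod 8), then c₁(n), the coefficient of q^(n+1) in
1/((q)_∞)^24, is even; equivalently its image in ZMod 2 vanishes. -/
theorem c1_even_of_not_seven_mod_eight (n : ℕ) (hn : 1 ≤ n) (h : n % 8 ≠ 7) :
    PowerSeries.coeff (R := ZMod 2) (n + 1) (((qPochInf (ZMod 2) 1) ^ 24)⁻¹) = 0 := by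
  set F : PowerSeries (ZMod 2) := (qPochInf (ZMod 2) 1) ^ 24 with hF
  have hc0 : PowerSeries.coeff (R := ZMod 2) 0 F = 1 := by
    have : PowerSeries.coeff (R := ZMod 2) 0 (qPochInf (ZMod 2) 1) = 1 := by
      rw [qPochInf, PowerSeries.coeff_mk]
      simp
    rw [hF, coeff_pow_congr (f := qPochInf (ZMod 2) 1) (g := 1)
      (n := 0) (by intro i hi; interval_cases i; simpa using this) 24 0 le_rfl]
    simp
  have hc : PowerSeries.constantCoeff (R := ZMod 2) F ≠ 0 := by
    rw [← PowerSeries.coeff_zero_eq_constantCoeff_apply, hc0]; exact one_ne_zero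
  have hmul : F * F⁻¹ = 1 := PowerSeries.mul_inv_cancel _ hc
  have key : ∀ N, ¬ (8 ∣ N) → PowerSeries.coeff (R := ZMod 2) N F⁻¹ = 0 := by
    intro N
    induction N using Nat.strong_induction_on with
    | _ N ih =>
      intro hN
      have hN0 : N ≠ 0 := by rintro rfl; exact hN ⟨0, rfl⟩
      have h1 : PowerSeries.coeff (R := ZMod 2) N (F * F⁻¹) = 0 := by
        rw [hmul, PowerSeries.coeff_one, if_neg hN0]
      rw [PowerSeries.coeff_mul] at h1
      rw [Finset.sum_eq_single (0, N)] at h1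
      · simpa [hc0] using h1
      · intro p hp hne
        rw [Finset.HasAntidiagonal.mem_antidiagonal] at hp
        have hp1 : p.1 ≠ 0 := by
          rintro h0
          exact hne (by cases p; simp_all)
        by_cases hd : 8 ∣ p.1
        · have hd2 : ¬ 8 ∣ p.2 := fun hh => hN (hp ▸ Nat.dvd_add hd hh)
          rw [ih p.2 (by omega) hd2, mul_zero]
        · rw [ok_F24 p.1 hd, zero_mul]
      · intro habs
        exact absurd (Finset.HasAntidiagonal.mem_antidiagonal.mpr (by simp)) habs
  exact key (n + 1) (by omega)
end

section
/- For every n ≥ 1, c₁(8n−1) ≡ c_{μ₂}(n) (mod 2), where c₁(m) is the coefficient of q^{m+1} in 1/((q)_∞)^{24} and c_{μ₂}(n) is the n-th coefficient of 1/((q)_∞)^3. -/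
open PowerSeries Finset

lemma zmod2_mul_self (x : ZMod 2) : x * x = x := by revert x; decide

/-- Frobenius on coefficients: over `ZMod 2`, the `2m`-th coefficient of `F²` is the
`m`-th coefficient of `F`. -/
lemma coeff_sq (F : PowerSeries (ZMod 2)) (m : ℕ) :
    PowerSeries.coeff (R := ZMod 2) (2 * m) (F ^ 2) = PowerSeries.coeff (R := ZMod 2) m F := by
  classical
  have hmm : (m, m) ∈ Finset.HasAntidiagonal.antidiagonal (2 * m) := by
    simp [Finset.mem_antidiagonal, two_mul]
  rw [pow_two, PowerSeries.coeff_mul,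
    ← Finset.add_sum_erase _ _ hmm, zmod2_mul_self]
  have h0 : ∑ p ∈ (Finset.HasAntidiagonal.antidiagonal (2 * m)).erase (m, m),
      PowerSeries.coeff (R := ZMod 2) p.1 F * PowerSeries.coeff (R := ZMod 2) p.2 F = 0 := by
    apply Finset.sum_involution (fun a _ => Prod.swap a)
    · intro a _
      have h2 : (2 : ZMod 2) = 0 := by decide
      show PowerSeries.coeff (R := ZMod 2) a.1 F * PowerSeries.coeff (R := ZMod 2) a.2 F +
        PowerSeries.coeff (R := ZMod 2) a.2 F * PowerSeries.coeff (R := ZMod 2) a.1 F = 0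
      rw [show PowerSeries.coeff (R := ZMod 2) a.1 F * PowerSeries.coeff (R := ZMod 2) a.2 F +
        PowerSeries.coeff (R := ZMod 2) a.2 F * PowerSeries.coeff (R := ZMod 2) a.1 F =
        2 * (PowerSeries.coeff (R := ZMod 2) a.1 F * PowerSeries.coeff (R := ZMod 2) a.2 F) by ring,
        h2, zero_mul]
    · intro a ha _
      intro hswap
      have h1 : a.2 = a.1 := congrArg Prod.fst hswap
      have hanti := Finset.mem_of_mem_erase ha
      rw [Finset.HasAntidiagonal.mem_antidiagonal] at hanti
      have : a.1 = m := by omega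
      have : a = (m, m) := by
        have := h1; exact Prod.ext ‹a.1 = m› (by omega)
      exact (Finset.ne_of_mem_erase ha) this
    · intro a ha
      simp only [Finset.mem_erase] at ha ⊢
      constructor
      · intro hsw
        apply ha.1
        have h1 : a.1 = m := congrArg Prod.snd hsw
        have h2 : a.2 = m := congrArg Prod.fst hsw
        exact Prod.ext h1 h2
      · rw [Finset.HasAntidiagonal.mem_antidiagonal] at ha ⊢
        simp only [Prod.fst_swap, Prod.snd_swap]
        omega
    · intro a _; exact Prod.swap_swap a
  rw [h0, add_zero]

lemma coeff_pow8 (F : PowerSeries (ZMod 2)) (n : ℕ) :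
    PowerSeries.coeff (R := ZMod 2) (8 * n) (F ^ 8) = PowerSeries.coeff (R := ZMod 2) n F := by
  have h8 : F ^ 8 = ((F ^ 2) ^ 2) ^ 2 := by ring
  rw [h8, show 8 * n = 2 * (2 * (2 * n)) by ring, coeff_sq, coeff_sq, coeff_sq]

lemma constCoeff_qPochInf : PowerSeries.constantCoeff (R := ZMod 2) (qPochInf (ZMod 2) 1) = 1 := by
  rw [← PowerSeries.coeff_zero_eq_constantCoeff]
  simp [qPochInf]

/-- c₁(8n−1) ≡ c_{μ₂}(n) (mod 2): the coefficient of q^(8n) in ((q)_∞)^(−24) is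
congruent mod 2 to the coefficient of q^n in ((q)_∞)^(−3). -/
theorem c1_eight_n_sub_one_congr_mu2 (n : ℕ) (hn : 1 ≤ n) :
    PowerSeries.coeff (R := ZMod 2) (8 * n) (((qPochInf (ZMod 2) 1) ^ 24)⁻¹) =
      PowerSeries.coeff (R := ZMod 2) n (((qPochInf (ZMod 2) 1) ^ 3)⁻¹) := by
  set P := qPochInf (ZMod 2) 1 with hP
  have hc3 : PowerSeries.constantCoeff (R := ZMod 2) (P ^ 3) ≠ 0 := by
    rw [map_pow, constCoeff_qPochInf, one_pow]; exact one_ne_zero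
  have hc24 : PowerSeries.constantCoeff (R := ZMod 2) (P ^ 24) ≠ 0 := by
    rw [map_pow, constCoeff_qPochInf, one_pow]; exact one_ne_zero
  have key : (P ^ 24)⁻¹ = ((P ^ 3)⁻¹) ^ 8 := by
    rw [PowerSeries.inv_eq_iff_mul_eq_one hc24]
    calc ((P ^ 3)⁻¹) ^ 8 * P ^ 24 = ((P ^ 3)⁻¹ * P ^ 3) ^ 8 := by ring
    _ = 1 := by rw [PowerSeries.inv_mul_cancel _ hc3, one_pow]
  rw [key, coeff_pow8]
end

section
/- With c₃(n) the n-th Fourier coefficient of the hauptmodul j₃ (coefficient of q^n in q^{-1}((q)_∞/(q³)_∞)^{12}), we have c₃(4n+1) ≡ 0 (mod 2) for all n ≥ 0. -/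
open PowerSeries Finset

/-- If no `m` with `m + m = k` has `coeff m f ≠ 0`, then the `k`-th coefficient of `f ^ 2`
vanishes over `ZMod 2` (off-diagonal terms cancel in pairs in characteristic 2). -/
lemma coeff_sq_zero (f : PowerSeries (ZMod 2)) {k : ℕ}
    (h : ∀ m, k = m + m → PowerSeries.coeff (R := ZMod 2) m f = 0) :
    PowerSeries.coeff (R := ZMod 2) k (f ^ 2) = 0 := by
  rw [sq, PowerSeries.coeff_mul]
  refine Finset.sum_involution (fun p _ => p.swap) ?_ ?_ ?_ ?_
  · intro p hp
    rcases eq_or_ne p.1 p.2 with he | hne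
    · have hk : k = p.1 + p.1 := by
        have := Finset.HasAntidiagonal.mem_antidiagonal.mp hp; omega
      simp [h p.1 hk, Prod.swap, ← he]
    · simp only [Prod.swap]
      rw [mul_comm]
      exact CharTwo.add_self_eq_zero _
  · intro p hp hne
    intro hsw
    apply hne
    have h12 : p.1 = p.2 := by
      have := congrArg Prod.fst hsw; simpa using this.symm
    have hk : k = p.1 + p.1 := by
      have := Finset.HasAntidiagonal.mem_antidiagonal.mp hp; omega
    simp [h p.1 hk]
  · intro p hp
    rw [Finset.HasAntidiagonal.mem_antidiagonal] at hp ⊢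
    simp only [Prod.fst_swap, Prod.snd_swap]
    omega
  · intro p hp; rfl

/-- Fourth powers over `ZMod 2` are supported in degrees divisible by 4. -/
lemma coeff_pow_four (f : PowerSeries (ZMod 2)) {k : ℕ} (hk : ¬ (4 ∣ k)) :
    PowerSeries.coeff (R := ZMod 2) k (f ^ 4) = 0 := by
  have h4 : f ^ 4 = (f ^ 2) ^ 2 := by ring
  rw [h4]
  apply coeff_sq_zero
  intro m hm
  apply coeff_sq_zero
  intro m' hm'
  omega

/-- A power series is supported in degrees divisible by 4. -/
def Supp4 (f : PowerSeries (ZMod 2)) : Prop :=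
  ∀ k : ℕ, ¬ (4 ∣ k) → PowerSeries.coeff (R := ZMod 2) k f = 0

lemma Supp4.mul {f g : PowerSeries (ZMod 2)} (hf : Supp4 f) (hg : Supp4 g) :
    Supp4 (f * g) := by
  intro k hk
  rw [PowerSeries.coeff_mul]
  refine Finset.sum_eq_zero ?_
  intro p hp
  have hps : p.1 + p.2 = k := Finset.HasAntidiagonal.mem_antidiagonal.mp hp
  by_cases h1 : (4 : ℕ) ∣ p.1
  · have h2 : ¬ (4 ∣ p.2) := by
      intro h2; exact hk (hps ▸ dvd_add h1 h2)
    rw [hg p.2 h2, mul_zero]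
  · rw [hf p.1 h1, zero_mul]

lemma Supp4.inv {f : PowerSeries (ZMod 2)} (hf : Supp4 f) : Supp4 f⁻¹ := by
  intro k
  induction k using Nat.strong_induction_on with
  | _ k ih =>
    intro hk
    rw [PowerSeries.coeff_inv]
    have hk0 : k ≠ 0 := by rintro rfl; exact hk ⟨0, rfl⟩
    rw [if_neg hk0]
    have : ∑ x ∈ antidiagonal k,
        (if x.2 < k then PowerSeries.coeff (R := ZMod 2) x.1 f *
          PowerSeries.coeff (R := ZMod 2) x.2 f⁻¹ else 0) = 0 := by
      refine Finset.sum_eq_zero ?_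
      intro p hp
      have hps : p.1 + p.2 = k := Finset.HasAntidiagonal.mem_antidiagonal.mp hp
      by_cases hlt : p.2 < k
      · rw [if_pos hlt]
        by_cases h1 : (4 : ℕ) ∣ p.1
        · have h2 : ¬ (4 ∣ p.2) := by
            intro h2; exact hk (hps ▸ dvd_add h1 h2)
          rw [ih p.2 hlt h2, mul_zero]
        · rw [hf p.1 h1, zero_mul]
      · rw [if_neg hlt]
    rw [this, mul_zero]

/-- With c₃(n) the coefficient of q^n in q⁻¹((q)_∞/(q³)_∞)^12, i.e. the coefficient of
q^(n+1) in ((q)_∞)^12/((q³)_∞)^12, we have c₃(4n+1) ≡ 0 (mod 2) for all n ≥ 0. -/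
theorem c3_four_n_plus_one_even (n : ℕ) :
    PowerSeries.coeff (R := ZMod 2) (4 * n + 2)
      ((qPochInf (ZMod 2) 1) ^ 12 * ((qPochInf (ZMod 2) 3) ^ 12)⁻¹) = 0 := by
  have hA : Supp4 ((qPochInf (ZMod 2) 1) ^ 12) := by
    intro k hk
    have : (qPochInf (ZMod 2) 1) ^ 12 = ((qPochInf (ZMod 2) 1) ^ 3) ^ 4 := by ring
    rw [this]
    exact coeff_pow_four _ hk
  have hB : Supp4 (((qPochInf (ZMod 2) 3) ^ 12)⁻¹) := by
    apply Supp4.inv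
    intro k hk
    have : (qPochInf (ZMod 2) 3) ^ 12 = ((qPochInf (ZMod 2) 3) ^ 3) ^ 4 := by ring
    rw [this]
    exact coeff_pow_four _ hk
  exact (hA.mul hB) (4 * n + 2) (by omega)
end
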